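/- Let S be a nonempty finite type, q ∈ PMF S a probability mass function on S, n a positive integer and δ ∈ (0,1). Let Y_1, …, Y_n be i.i.d. random variables distributed according to q, and let q̂(s) = (1/n)·#{i ∈ {1,…,n} : Y_i = s} be the empirical distribution. Then the probability that Σ_{s∈S} |q̂(s) − q(s)| > √((2/n)·log(2·2^{|S|} / δ)) is at most δ. -/

import Mathlib

open Real

lemma bernoulli_mgf_le {p l : ℝ} (hp0 : 0 ≤ p) (hp1 : p ≤ 1) :
    exp (-(l * p)) * (1 - p + p * exp l) ≤ exp (l ^ 2 / 8) := by
  set u : ℝ → ℝ := fun x => 1 - p + p * exp x with hu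
  have hupos : ∀ x, 0 < u x := by
    intro x
    rcases hp0.lt_or_eq with h | h
    · have h2 : 0 < p * exp x := mul_pos h (exp_pos x)
      have h1 : 0 ≤ 1 - p := by linarith
      simp only [hu]; linarith
    · simp only [hu, ← h]; norm_num
  have hud : ∀ x, HasDerivAt u (p * exp x) x := by
    intro x
    exact ((Real.hasDerivAt_exp x).const_mul p).const_add (1 - p)
  set F : ℝ → ℝ := fun x => x ^ 2 / 8 + x * p - Real.log (u x) with hF
  set F' : ℝ → ℝ := fun x => x / 4 + p - p * exp x / u x with hF'
  have hFd : ∀ x, HasDerivAt F (F' x) x := by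
    intro x
    have h1 : HasDerivAt (fun x : ℝ => x ^ 2 / 8 + x * p) (x / 4 + p) x := by
      have := ((hasDerivAt_pow 2 x).div_const 8).add ((hasDerivAt_id x).mul_const p)
      exact this.congr_deriv (by rw [show (2:ℕ) - 1 = 1 from rfl, pow_one]; push_cast; ring)
    have h2 : HasDerivAt (fun x => Real.log (u x)) (p * exp x / u x) x :=
      (hud x).log (hupos x).ne'
    exact h1.sub h2
  have hF'd : ∀ x, HasDerivAt F'
      (1 / 4 - (p * exp x * u x - p * exp x * (p * exp x)) / (u x) ^ 2) x := by
    intro x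
    have h1 : HasDerivAt (fun x : ℝ => x / 4 + p) (1 / 4) x := by
      simpa using ((hasDerivAt_id x).div_const 4).add_const p
    have h2 : HasDerivAt (fun x => p * exp x / u x)
        ((p * exp x * u x - p * exp x * (p * exp x)) / (u x) ^ 2) x :=
      ((Real.hasDerivAt_exp x).const_mul p).div (hud x) (hupos x).ne'
    exact h1.sub h2
  have hnonneg : ∀ x, 0 ≤ 1 / 4 - (p * exp x * u x - p * exp x * (p * exp x)) / (u x) ^ 2 := by
    intro x
    have hu2 : (0:ℝ) < (u x) ^ 2 := pow_pos (hupos x) 2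
    have hxeq : u x = 1 - p + p * exp x := rfl
    have key : p * exp x * u x - p * exp x * (p * exp x) ≤ 1 / 4 * (u x) ^ 2 := by
      nlinarith [sq_nonneg (p * exp x - (1 - p)), exp_pos x]
    have := (div_le_iff₀ hu2).mpr key
    linarith
  -- F' monotone
  have hF'mono : Monotone F' := by
    apply monotone_of_deriv_nonneg (fun x => (hF'd x).differentiableAt)
    intro x
    rw [(hF'd x).deriv]
    exact hnonneg x
  have hF'0 : F' 0 = 0 := by
    simp only [hF', hu]
    norm_num
  have hF'nonneg : ∀ x, 0 ≤ x → 0 ≤ F' x := fun x hx => hF'0 ▸ hF'mono hx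
  have hFmono : MonotoneOn F (Set.Ici 0) := by
    apply monotoneOn_of_deriv_nonneg (convex_Ici 0)
    · exact fun x _ => ((hFd x).differentiableAt.continuousAt).continuousWithinAt
    · exact fun x _ => ((hFd x).differentiableAt).differentiableWithinAt
    · intro x hx
      rw [(hFd x).deriv]
      exact hF'nonneg x (le_of_lt (by simpa using hx))
  have hF0 : F 0 = 0 := by simp [hF, hu]
  -- case split on sign of l
  have hFneg : ∀ x, x ≤ 0 → 0 ≤ F x := by
    have hF'anti : ∀ x, x ≤ 0 → F' x ≤ 0 := fun x hx => hF'0 ▸ hF'mono hx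
    have hFanti : AntitoneOn F (Set.Iic 0) := by
      apply antitoneOn_of_deriv_nonpos (convex_Iic 0)
      · exact fun x _ => ((hFd x).differentiableAt.continuousAt).continuousWithinAt
      · exact fun x _ => ((hFd x).differentiableAt).differentiableWithinAt
      · intro x hx
        rw [(hFd x).deriv]
        exact hF'anti x (le_of_lt (by simpa using hx))
    intro x hx
    have := hFanti (Set.mem_Iic.mpr hx) (Set.mem_Iic.mpr le_rfl) hx
    simpa [hF0] using this
  have hFl : 0 ≤ F l := by
    rcases le_or_gt l 0 with h | h
    · exact hFneg l h
    · have := hFmono (Set.mem_Ici.mpr le_rfl) (Set.mem_Ici.mpr h.le) h.le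
      simpa [hF0] using this
  -- conclude
  have hlog : Real.log (u l) ≤ l ^ 2 / 8 + l * p := by
    have h0 : 0 ≤ l ^ 2 / 8 + l * p - Real.log (u l) := hFl
    linarith
  have hule : u l ≤ exp (l ^ 2 / 8 + l * p) := by
    calc u l = exp (Real.log (u l)) := (exp_log (hupos l)).symm
    _ ≤ _ := exp_le_exp.mpr hlog
  calc exp (-(l * p)) * (1 - p + p * exp l) = exp (-(l * p)) * u l := rfl
  _ ≤ exp (-(l * p)) * exp (l ^ 2 / 8 + l * p) := by
      exact mul_le_mul_of_nonneg_left hule (exp_pos _).le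
  _ = exp (l ^ 2 / 8) := by rw [← exp_add]; ring_nf

open MeasureTheory ProbabilityTheory Finset
open scoped ENNReal NNReal

lemma integrable_exp_of_bounded {Ω : Type*} [MeasureSpace Ω] [IsFiniteMeasure (ℙ : Measure Ω)]
    (X : Ω → ℝ) (hX : Measurable X) (C t : ℝ) (hC : ∀ ω, |X ω| ≤ C) :
    Integrable (fun ω => Real.exp (t * X ω)) ℙ := by
  refine Integrable.mono' (integrable_const (Real.exp (|t| * C)))
    ((hX.const_mul t).exp.aestronglyMeasurable) (ae_of_all _ fun ω => ?_)
  rw [Real.norm_eq_abs, abs_of_pos (exp_pos _)]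
  apply Real.exp_le_exp.mpr
  calc t * X ω ≤ |t * X ω| := le_abs_self _
  _ = |t| * |X ω| := abs_mul t (X ω)
  _ ≤ |t| * C := mul_le_mul_of_nonneg_left (hC ω) (abs_nonneg t)

lemma subset_chernoff
    {Ω : Type*} [MeasureSpace Ω] [IsProbabilityMeasure (ℙ : Measure Ω)]
    {S : Type*} [Fintype S] [DecidableEq S]
    [MeasurableSpace S] [MeasurableSingletonClass S]
    (q : PMF S)
    (n : ℕ)
    (Y : Fin n → Ω → S)
    (hmeas : ∀ i, Measurable (Y i))
    (hindep : iIndepFun Y ℙ)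
    (hlaw : ∀ i, Measure.map (Y i) ℙ = q.toMeasure)
    (A : Finset S) (ε : ℝ) (hε : 0 ≤ ε) :
    ℙ {ω | (n : ℝ) * ε ≤ ∑ i : Fin n,
        ((if Y i ω ∈ A then (1:ℝ) else 0) - ∑ s ∈ A, (q s).toReal)}
      ≤ ENNReal.ofReal (Real.exp (-2 * n * ε ^ 2)) := by
  classical
  set p : ℝ := ∑ s ∈ A, (q s).toReal with hp
  have hqA : q.toMeasure (↑A : Set S) = ∑ s ∈ A, q s := q.toMeasure_apply_finset A
  have hpq : p = (q.toMeasure (↑A : Set S)).toReal := by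
    rw [hqA, ENNReal.toReal_sum (fun s _ => q.apply_ne_top s)]
  have hp0 : 0 ≤ p := Finset.sum_nonneg fun s _ => ENNReal.toReal_nonneg
  have hp1 : p ≤ 1 := by
    rw [hpq]
    have h1 := prob_le_one (μ := q.toMeasure) (s := (↑A : Set S))
    calc (q.toMeasure (↑A : Set S)).toReal ≤ (1 : ℝ≥0∞).toReal :=
      ENNReal.toReal_mono ENNReal.one_ne_top h1
    _ = 1 := by simp
  set f : S → ℝ := fun s => (if s ∈ A then (1:ℝ) else 0) - p with hf
  have hfm : Measurable f := measurable_of_countable f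
  set W : Fin n → Ω → ℝ := fun i ω => f (Y i ω) with hW
  have hWmeas : ∀ i, Measurable (W i) := fun i => hfm.comp (hmeas i)
  have hWindep : iIndepFun W ℙ :=
    hindep.comp (fun _ => f) (fun _ => hfm)
  have hWbdd : ∀ i ω, |W i ω| ≤ 2 := by
    intro i ω
    simp only [hW, hf]
    split_ifs <;> rw [abs_le] <;> constructor <;> linarith
  set t : ℝ := 4 * ε with ht
  have ht0 : 0 ≤ t := by positivity
  have h_int : ∀ i, Integrable (fun ω => Real.exp (t * W i ω)) ℙ :=
    fun i => integrable_exp_of_bounded (W i) (hWmeas i) 2 t (hWbdd i)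
  -- expectation of the indicator
  have hInd : ∀ i, ∫ ω, (if Y i ω ∈ A then (1:ℝ) else 0) ∂ℙ = p := by
    intro i
    have hAm : MeasurableSet (↑A : Set S) := A.measurableSet
    have hpre : MeasurableSet (Y i ⁻¹' ↑A) := (hmeas i) hAm
    have heq : (fun ω => if Y i ω ∈ A then (1:ℝ) else 0)
        = (Y i ⁻¹' ↑A).indicator (1 : Ω → ℝ) := by
      funext ω
      simp [Set.indicator, Set.mem_preimage]
    rw [heq, integral_indicator_one hpre, measureReal_def, ← Measure.map_apply (hmeas i) hAm, hlaw i, hpq]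
  have hInd_int : ∀ i, Integrable (fun ω => if Y i ω ∈ A then (1:ℝ) else 0) ℙ := by
    intro i
    have hpre : MeasurableSet (Y i ⁻¹' ↑A) := (hmeas i) A.measurableSet
    have heq : (fun ω => if Y i ω ∈ A then (1:ℝ) else 0)
        = (Y i ⁻¹' ↑A).indicator (1 : Ω → ℝ) := by
      funext ω; simp [Set.indicator, Set.mem_preimage]
    rw [heq]
    exact (integrable_const 1).indicator hpre
  -- mgf of each W i
  have hmgf : ∀ i, mgf (W i) ℙ t = Real.exp (-(t * p)) * (1 - p + p * Real.exp t) := by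
    intro i
    have hptw : (fun ω => Real.exp (t * W i ω))
        = fun ω => Real.exp (-(t * p)) * (1 + (Real.exp t - 1) * (if Y i ω ∈ A then (1:ℝ) else 0)) := by
      funext ω
      simp only [hW, hf]
      split_ifs with h
      · rw [show t * ((1:ℝ) - p) = -(t * p) + t by ring, Real.exp_add]; ring
      · rw [show t * ((0:ℝ) - p) = -(t * p) by ring]; ring
    rw [mgf, hptw]
    rw [integral_const_mul]
    rw [integral_add (integrable_const 1) ((hInd_int i).const_mul _)]
    rw [integral_const, integral_const_mul, hInd i]
    simp [measure_univ]
    ring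
  -- Chernoff
  have hSmeas : Measurable (∑ i, W i) := by
    have heq : (∑ i, W i) = fun a => ∑ i, W i a := by
      funext a; simp [Finset.sum_apply]
    rw [heq]
    exact Finset.measurable_sum (Finset.univ : Finset (Fin n)) (fun i _ => hWmeas i)
  have hSbdd : ∀ ω, |(∑ i, W i) ω| ≤ 2 * n := by
    intro ω
    rw [Finset.sum_apply]
    calc |∑ i, W i ω| ≤ ∑ i, |W i ω| := Finset.abs_sum_le_sum_abs _ _
    _ ≤ ∑ _i : Fin n, (2:ℝ) := Finset.sum_le_sum fun i _ => hWbdd i ω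
    _ = 2 * n := by simp [mul_comm]
  have h_int_sum : Integrable (fun ω => Real.exp (t * (∑ i, W i) ω)) ℙ :=
    integrable_exp_of_bounded _ hSmeas (2 * n) t hSbdd
  have hchern := measure_ge_le_exp_mul_mgf (μ := ℙ) (X := ∑ i, W i) ((n : ℝ) * ε) ht0 h_int_sum
  have hmgfsum : mgf (∑ i, W i) ℙ t = (Real.exp (-(t * p)) * (1 - p + p * Real.exp t)) ^ n := by
    rw [hWindep.mgf_sum hWmeas Finset.univ]
    simp [hmgf]
  have hmgf_le : mgf (∑ i, W i) ℙ t ≤ Real.exp (n * t ^ 2 / 8) := by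
    rw [hmgfsum]
    calc (Real.exp (-(t * p)) * (1 - p + p * Real.exp t)) ^ n
        ≤ (Real.exp (t ^ 2 / 8)) ^ n := by
          apply pow_le_pow_left₀ _ (bernoulli_mgf_le hp0 hp1) n
          apply mul_nonneg (exp_pos _).le
          nlinarith [exp_pos t, mul_nonneg hp0 (exp_pos t).le]
    _ = Real.exp (n * t ^ 2 / 8) := by rw [← Real.exp_nat_mul]; ring_nf
  have hfinal : (ℙ {ω | (n : ℝ) * ε ≤ (∑ i, W i) ω}).toReal ≤ Real.exp (-2 * n * ε ^ 2) := by
    calc (ℙ {ω | (n : ℝ) * ε ≤ (∑ i, W i) ω}).toReal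
        ≤ Real.exp (-t * ((n:ℝ) * ε)) * mgf (∑ i, W i) ℙ t := hchern
    _ ≤ Real.exp (-t * ((n:ℝ) * ε)) * Real.exp (n * t ^ 2 / 8) :=
        mul_le_mul_of_nonneg_left hmgf_le (exp_pos _).le
    _ = Real.exp (-2 * n * ε ^ 2) := by rw [← Real.exp_add]; congr 1; rw [ht]; ring
  have hseteq : {ω | (n : ℝ) * ε ≤ ∑ i : Fin n,
        ((if Y i ω ∈ A then (1:ℝ) else 0) - ∑ s ∈ A, (q s).toReal)}
      = {ω | (n : ℝ) * ε ≤ (∑ i, W i) ω} := by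
    ext ω
    simp only [Set.mem_setOf_eq, Finset.sum_apply, hW, hf, hp]
  rw [hseteq]
  exact (ENNReal.le_ofReal_iff_toReal_le (measure_ne_top _ _) (exp_pos _).le).mpr hfinal

/-- L1 concentration bound for the empirical distribution of `n` i.i.d. samples from a
distribution `q` on a finite set `S`: the L1 distance between the empirical distribution and
`q` exceeds `√((2/n)·log(2·2^{|S|}/δ))` with probability at most `δ`. -/
theorem empirical_distribution_l1_concentration
    {Ω : Type*} [MeasureSpace Ω] [IsProbabilityMeasure (ℙ : Measure Ω)]
    {S : Type*} [Fintype S] [Nonempty S] [DecidableEq S]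
    [MeasurableSpace S] [MeasurableSingletonClass S]
    (q : PMF S)
    (n : ℕ) (hn : 0 < n)
    (δ : ℝ) (hδ : δ ∈ Set.Ioo (0 : ℝ) 1)
    (Y : Fin n → Ω → S)
    (hmeas : ∀ i, Measurable (Y i))
    (hindep : iIndepFun Y ℙ)
    (hlaw : ∀ i, Measure.map (Y i) ℙ = q.toMeasure) :
    ℙ {ω | ∑ s : S,
          |(1 / (n : ℝ)) * ((Finset.univ.filter fun i : Fin n => Y i ω = s).card : ℝ)
            - (q s).toReal|
        > Real.sqrt ((2 / (n : ℝ)) * Real.log (2 * 2 ^ (Fintype.card S) / δ))}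
      ≤ ENNReal.ofReal δ := by
  classical
  obtain ⟨hδ0, hδ1⟩ := hδ
  set k : ℕ := Fintype.card S with hk
  have hnR : (0:ℝ) < n := by exact_mod_cast hn
  set L : ℝ := Real.log (2 * 2 ^ k / δ) with hL
  have hLpos : 0 < L := by
    apply Real.log_pos
    have h2k : (1:ℝ) ≤ 2 ^ k := one_le_pow₀ (by norm_num)
    rw [lt_div_iff₀ hδ0]
    nlinarith
  set t : ℝ := Real.sqrt ((2 / (n : ℝ)) * L) with htdef
  have htsq : t ^ 2 = (2 / (n : ℝ)) * L := by
    rw [htdef, Real.sq_sqrt]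
    positivity
  have htpos : 0 < t := Real.sqrt_pos.mpr (by positivity)
  -- empirical measure notation
  set c : Ω → S → ℝ := fun ω s => ((Finset.univ.filter fun i : Fin n => Y i ω = s).card : ℝ)
    with hc
  set E : Finset S → Set Ω := fun A => {ω | (n : ℝ) * (t / 2) ≤ ∑ i : Fin n,
      ((if Y i ω ∈ A then (1:ℝ) else 0) - ∑ s ∈ A, (q s).toReal)} with hE
  -- pointwise inclusion into the union over subsets
  have hsub : {ω | ∑ s : S, |(1 / (n : ℝ)) * c ω s - (q s).toReal| > t}
      ⊆ ⋃ A ∈ (Finset.univ : Finset (Finset S)), E A := by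
    intro ω hω
    simp only [Set.mem_setOf_eq] at hω
    set a : S → ℝ := fun s => (1 / (n : ℝ)) * c ω s - (q s).toReal with ha
    -- empirical sums to 1
    have hsum1 : ∑ s : S, (1 / (n : ℝ)) * c ω s = 1 := by
      rw [← Finset.mul_sum]
      have hcard : (Finset.univ : Finset (Fin n)).card
          = ∑ s : S, (Finset.univ.filter fun i : Fin n => Y i ω = s).card :=
        Finset.card_eq_sum_card_fiberwise (fun i _ => Finset.mem_univ _)
      have : ∑ s : S, c ω s = (n : ℝ) := by
        simp only [hc]
        rw [← Nat.cast_sum, ← hcard, Finset.card_univ, Fintype.card_fin]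
      rw [this]
      field_simp
    have hsum2 : ∑ s : S, (q s).toReal = 1 := by
      have h1 : ∑' s : S, q s = 1 := q.tsum_coe
      rw [tsum_fintype] at h1
      have h2 := congrArg ENNReal.toReal h1
      rwa [ENNReal.toReal_sum (fun s _ => q.apply_ne_top s), ENNReal.toReal_one] at h2
    have hsa : ∑ s : S, a s = 0 := by
      simp only [ha, Finset.sum_sub_distrib, hsum1, hsum2, sub_self]
    set A : Finset S := Finset.univ.filter fun s => (q s).toReal ≤ (1 / (n : ℝ)) * c ω s
      with hA
    have habs : ∑ s : S, |a s| = 2 * ∑ s ∈ A, a s := by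
      have hsplit := Finset.sum_filter_add_sum_filter_not (Finset.univ : Finset S)
        (fun s => (q s).toReal ≤ (1 / (n : ℝ)) * c ω s) (fun s => |a s|)
      have hsplit2 := Finset.sum_filter_add_sum_filter_not (Finset.univ : Finset S)
        (fun s => (q s).toReal ≤ (1 / (n : ℝ)) * c ω s) a
      have hApos : ∑ s ∈ A, |a s| = ∑ s ∈ A, a s := by
        apply Finset.sum_congr rfl
        intro s hs
        rw [hA, Finset.mem_filter] at hs
        exact abs_of_nonneg (by simp only [ha]; linarith [hs.2])
      have hAneg : ∑ s ∈ Finset.univ.filter (fun s => ¬((q s).toReal ≤ (1 / (n : ℝ)) * c ω s)),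
          |a s| = -∑ s ∈ Finset.univ.filter
            (fun s => ¬((q s).toReal ≤ (1 / (n : ℝ)) * c ω s)), a s := by
        rw [← Finset.sum_neg_distrib]
        apply Finset.sum_congr rfl
        intro s hs
        rw [Finset.mem_filter] at hs
        exact abs_of_nonpos (by simp only [ha]; push_neg at hs; linarith [hs.2])
      rw [hsa] at hsplit2
      rw [← hsplit, hApos, hAneg]
      have : ∑ s ∈ Finset.univ.filter
          (fun s => ¬((q s).toReal ≤ (1 / (n : ℝ)) * c ω s)), a s = - ∑ s ∈ A, a s := by
        rw [hA]; linarith [hsplit2]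
      rw [this]
      ring
    have hAbig : t / 2 < ∑ s ∈ A, a s := by
      rw [habs] at hω
      linarith
    -- membership in E A
    refine Set.mem_iUnion₂.mpr ⟨A, Finset.mem_univ A, ?_⟩
    simp only [hE, Set.mem_setOf_eq]
    have hcount : ∑ i : Fin n, (if Y i ω ∈ A then (1:ℝ) else 0) = ∑ s ∈ A, c ω s := by
      rw [Finset.sum_boole]
      have hcard : (Finset.univ.filter fun i : Fin n => Y i ω ∈ A).card
          = ∑ s ∈ A, (Finset.univ.filter fun i : Fin n => Y i ω = s).card := by
        rw [Finset.card_eq_sum_card_fiberwise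
          (f := fun i => Y i ω) (s := Finset.univ.filter fun i : Fin n => Y i ω ∈ A) (t := A)
          (fun i hi => (Finset.mem_filter.mp hi).2)]
        apply Finset.sum_congr rfl
        intro s hs
        congr 1
        ext i
        simp only [Finset.mem_filter, Finset.mem_univ, true_and]
        constructor
        · rintro ⟨_, h⟩; exact h
        · intro h; exact ⟨h ▸ hs, h⟩
      rw [hcard]
      simp [hc]
    rw [Finset.sum_sub_distrib, Finset.sum_const, Finset.card_univ, Fintype.card_fin,
      hcount]
    have hexp : ∑ s ∈ A, c ω s - n • ∑ s ∈ A, (q s).toReal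
        = (n : ℝ) * ∑ s ∈ A, a s := by
      rw [nsmul_eq_mul, Finset.mul_sum, Finset.mul_sum]
      rw [← Finset.sum_sub_distrib]
      apply Finset.sum_congr rfl
      intro s _
      simp only [ha]
      field_simp
    rw [hexp]
    have := mul_le_mul_of_nonneg_left hAbig.le hnR.le
    linarith
  -- union bound
  calc ℙ {ω | ∑ s : S, |(1 / (n : ℝ)) * c ω s - (q s).toReal| > t}
      ≤ ℙ (⋃ A ∈ (Finset.univ : Finset (Finset S)), E A) := measure_mono hsub
  _ ≤ ∑ A ∈ (Finset.univ : Finset (Finset S)), ℙ (E A) := measure_biUnion_finset_le _ _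
  _ ≤ ∑ _A ∈ (Finset.univ : Finset (Finset S)),
        ENNReal.ofReal (Real.exp (-2 * n * (t / 2) ^ 2)) := by
      apply Finset.sum_le_sum
      intro A _
      exact subset_chernoff q n Y hmeas hindep hlaw A (t / 2) (by positivity)
  _ ≤ ENNReal.ofReal δ := by
      rw [Finset.sum_const, Finset.card_univ, Fintype.card_finset, ← hk]
      have hval : Real.exp (-2 * n * (t / 2) ^ 2) = δ / (2 * 2 ^ k) := by
        have h1 : -2 * (n:ℝ) * (t / 2) ^ 2 = -L := by
          have : (t / 2) ^ 2 = t ^ 2 / 4 := by ring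
          rw [this, htsq]
          field_simp
          ring
        rw [h1, hL, ← Real.log_inv, Real.exp_log]
        · rw [inv_div]
        · have h2k : (0:ℝ) < 2 ^ k := by positivity
          rw [inv_pos]
          positivity
      rw [hval]
      rw [nsmul_eq_mul]
      have hcast : ((2 ^ k : ℕ) : ℝ≥0∞) = ENNReal.ofReal ((2:ℝ) ^ k) := by
        rw [← ENNReal.ofReal_natCast]
        norm_num
      rw [hcast, ← ENNReal.ofReal_mul (by positivity)]
      apply ENNReal.ofReal_le_ofReal
      have h2k : (0:ℝ) < 2 ^ k := by positivity
      rw [show (2:ℝ) ^ k * (δ / (2 * 2 ^ k)) = δ / 2 by field_simp]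
      linarith
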